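/- An operator X on (C^d)^{⊗k} commutes with U^{⊗k} for all unitaries U if and only if X is a linear combination of the permutation operators W_π, π ∈ S_k. -/

import Mathlib

open Matrix

set_option linter.unusedSectionVars false
set_option maxHeartbeats 1000000

/-- The `k`-fold tensor power `Y^{⊗k}` of an operator `Y` on `ℂ^d`. -/
def tensorPow (d k : ℕ) (Y : Matrix (Fin d) (Fin d) ℂ) :
    Matrix (Fin k → Fin d) (Fin k → Fin d) ℂ :=
  Matrix.of fun j i => ∏ t, Y (j t) (i t)

/-- The permutation operator `W_π` on `(ℂ^d)^{⊗k}`. -/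
def permOp (d k : ℕ) (π : Equiv.Perm (Fin k)) :
    Matrix (Fin k → Fin d) (Fin k → Fin d) ℂ :=
  Matrix.of fun j i => if j = i ∘ π.symm then 1 else 0

section Aux
variable {d k : ℕ}

lemma comp_perm_eq_iff (f g : Fin k → Fin d) (π : Equiv.Perm (Fin k)) :
    f = g ∘ π.symm ↔ g = f ∘ π := by
  constructor <;> rintro rfl <;> ext t <;> simp

lemma permOp_mul_apply (π : Equiv.Perm (Fin k)) (A : Matrix (Fin k → Fin d) (Fin k → Fin d) ℂ)
    (j i : Fin k → Fin d) : (permOp d k π * A) j i = A (j ∘ π) i := by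
  rw [mul_apply]
  simp only [permOp, Matrix.of_apply, comp_perm_eq_iff, ite_mul, one_mul, zero_mul]
  simp

lemma mul_permOp_apply (π : Equiv.Perm (Fin k)) (A : Matrix (Fin k → Fin d) (Fin k → Fin d) ℂ)
    (j i : Fin k → Fin d) : (A * permOp d k π) j i = A j (i ∘ π.symm) := by
  rw [mul_apply]
  simp only [permOp, Matrix.of_apply, mul_ite, mul_one, mul_zero]
  simp

lemma tensorPow_comp (Y : Matrix (Fin d) (Fin d) ℂ) (π : Equiv.Perm (Fin k))
    (j i : Fin k → Fin d) : tensorPow d k Y (j ∘ π) i = tensorPow d k Y j (i ∘ π.symm) := by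
  show (∏ t, Y (j (π t)) (i t)) = ∏ s, Y (j s) (i (π.symm s))
  rw [← Equiv.prod_comp π (fun s => Y (j s) (i (π.symm s)))]
  exact Finset.prod_congr rfl (fun t _ => by simp)

lemma permOp_comm_tensorPow (π : Equiv.Perm (Fin k)) (Y : Matrix (Fin d) (Fin d) ℂ) :
    permOp d k π * tensorPow d k Y = tensorPow d k Y * permOp d k π := by
  ext j i
  rw [permOp_mul_apply, mul_permOp_apply, tensorPow_comp]

lemma tensorPow_mul (Y Z : Matrix (Fin d) (Fin d) ℂ) :
    tensorPow d k Y * tensorPow d k Z = tensorPow d k (Y * Z) := by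
  ext j i
  rw [mul_apply]
  show (∑ l : Fin k → Fin d, (∏ t, Y (j t) (l t)) * ∏ t, Z (l t) (i t))
      = ∏ t, (Y * Z) (j t) (i t)
  simp_rw [← Finset.prod_mul_distrib, mul_apply]
  rw [Finset.prod_univ_sum, Fintype.piFinset_univ]

lemma tensorPow_one : tensorPow d k (1 : Matrix (Fin d) (Fin d) ℂ) = 1 := by
  ext j i
  show (∏ t, (1 : Matrix (Fin d) (Fin d) ℂ) (j t) (i t)) = (1 : Matrix _ _ ℂ) j i
  by_cases h : j = i
  · subst h; simp [Matrix.one_apply]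
  · obtain ⟨t, ht⟩ := Function.ne_iff.mp h
    rw [Matrix.one_apply_ne h, Finset.prod_eq_zero (Finset.mem_univ t)]
    exact Matrix.one_apply_ne ht

lemma tensorPow_smul (c : ℂ) (Y : Matrix (Fin d) (Fin d) ℂ) :
    tensorPow d k (c • Y) = c ^ k • tensorPow d k Y := by
  ext j i
  show (∏ t, (c • Y) (j t) (i t)) = c ^ k * ∏ t, Y (j t) (i t)
  simp [Finset.prod_mul_distrib, Finset.card_univ]


variable {d : ℕ}

lemma star_dot (v w : Fin d → ℂ) : star (star v ⬝ᵥ w) = star w ⬝ᵥ v := by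
  simp [dotProduct, mul_comm]

/-- If `star z = -z` and `A` is Hermitian then `1 + z • A` is nonsingular. -/
lemma det_one_add_smul_hermitian_ne_zero {z : ℂ} (hz : star z = -z)
    {A : Matrix (Fin d) (Fin d) ℂ} (hA : A.IsHermitian) :
    (1 + z • A).det ≠ 0 := by
  intro h
  obtain ⟨v, hv, hveq⟩ := (Matrix.exists_mulVec_eq_zero_iff).mpr h
  have hexp : star v ⬝ᵥ v + z * (star v ⬝ᵥ (A *ᵥ v)) = 0 := by
    have := congrArg (fun w => star v ⬝ᵥ w) hveq
    simpa [Matrix.add_mulVec, Matrix.smul_mulVec, Matrix.one_mulVec,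
      dotProduct_add, dotProduct_smul, smul_eq_mul] using this
  have hsstar : star (star v ⬝ᵥ v) = star v ⬝ᵥ v := star_dot v v
  have hcstar : star (star v ⬝ᵥ (A *ᵥ v)) = star v ⬝ᵥ (A *ᵥ v) := by
    rw [star_dot v (A *ᵥ v), Matrix.star_mulVec, ← Matrix.dotProduct_mulVec, hA.eq]
  have hconj : star v ⬝ᵥ v + (-z) * (star v ⬝ᵥ (A *ᵥ v)) = 0 := by
    have := congrArg star hexp
    rw [star_add, star_mul', hsstar, hcstar, hz, star_zero] at this
    exact this
  have h2 : (2 : ℂ) * (star v ⬝ᵥ v) = 0 := by linear_combination hexp + hconj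
  have hs0 : star v ⬝ᵥ v = 0 := by
    rcases mul_eq_zero.mp h2 with h' | h'
    · exact absurd h' two_ne_zero
    · exact h'
  have key : star v ⬝ᵥ v = ((∑ i, Complex.normSq (v i) : ℝ) : ℂ) := by
    push_cast
    simp [dotProduct, Complex.normSq_eq_conj_mul_self, Complex.star_def]
  have hre : (∑ i, Complex.normSq (v i)) = 0 := by
    have h0 : ((∑ i, Complex.normSq (v i) : ℝ) : ℂ) = 0 := by rw [← key, hs0]
    exact_mod_cast h0
  refine hv (funext fun i => Complex.normSq_eq_zero.mp ?_)
  exact (Finset.sum_eq_zero_iff_of_nonneg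
    (fun i _ => Complex.normSq_nonneg (v i))).mp hre i (Finset.mem_univ i)

/-- The Cayley transform of a Hermitian matrix is unitary. -/
lemma cayley_mem_unitaryGroup {A : Matrix (Fin d) (Fin d) ℂ} (hA : A.IsHermitian) :
    (1 - Complex.I • A) * (1 + Complex.I • A)⁻¹ ∈ Matrix.unitaryGroup (Fin d) ℂ := by
  set B := 1 + Complex.I • A with hB
  set Cm := 1 - Complex.I • A with hCm
  have hdetB : IsUnit B.det :=
    ((det_one_add_smul_hermitian_ne_zero (by simp) hA).isUnit)
  have hdetC : IsUnit Cm.det := by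
    have hCm' : Cm = 1 + (-Complex.I) • A := by rw [hCm, sub_eq_add_neg, ← neg_smul]
    rw [hCm']
    exact (det_one_add_smul_hermitian_ne_zero (by simp) hA).isUnit
  have hcomm : Cm * B = B * Cm := by
    rw [hB, hCm]
    generalize Complex.I • A = x
    noncomm_ring
  have hBstar : star B = Cm := by
    rw [hB, hCm]
    simp only [star_eq_conjTranspose]
    rw [Matrix.conjTranspose_add, Matrix.conjTranspose_smul, Matrix.conjTranspose_one, hA.eq]
    rw [Complex.star_def, Complex.conj_I]
    module
  have hCstar : star Cm = B := by
    rw [hB, hCm]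
    simp only [star_eq_conjTranspose]
    rw [Matrix.conjTranspose_sub, Matrix.conjTranspose_smul, Matrix.conjTranspose_one, hA.eq]
    rw [Complex.star_def, Complex.conj_I]
    module
  rw [Matrix.mem_unitaryGroup_iff]
  have hstarinv : star (B⁻¹) = Cm⁻¹ := by
    simp only [star_eq_conjTranspose] at hBstar ⊢
    rw [Matrix.conjTranspose_nonsing_inv, hBstar]
  rw [Matrix.star_mul, hstarinv, hCstar]
  have e1 : B⁻¹ * (B * Cm) * B⁻¹ = Cm * B⁻¹ := by
    rw [← Matrix.mul_assoc B⁻¹ B Cm, Matrix.nonsing_inv_mul _ hdetB, Matrix.one_mul]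
  have e2 : B⁻¹ * (Cm * B) * B⁻¹ = B⁻¹ * Cm := by
    rw [Matrix.mul_assoc, Matrix.mul_assoc, Matrix.mul_nonsing_inv _ hdetB, Matrix.mul_one]
  have hCBinv : Cm * B⁻¹ = B⁻¹ * Cm := by
    rw [← e1, ← hcomm]
    exact e2
  rw [hCBinv, Matrix.mul_assoc, ← Matrix.mul_assoc Cm Cm⁻¹ B,
    Matrix.mul_nonsing_inv _ hdetC, Matrix.one_mul, Matrix.nonsing_inv_mul _ hdetB]

-- depends on s1 (tensorPow lemmas) and s2 (cayley)
section Stage3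
open Matrix
variable {d k : ℕ}

/-- tensor power over polynomial matrices -/
noncomputable def tpPoly (d k : ℕ) (Y : Matrix (Fin d) (Fin d) (Polynomial ℂ)) :
    Matrix (Fin k → Fin d) (Fin k → Fin d) (Polynomial ℂ) :=
  Matrix.of fun j i => ∏ t, Y (j t) (i t)

lemma tpPoly_map_eval (z : ℂ) (Y : Matrix (Fin d) (Fin d) (Polynomial ℂ)) :
    (tpPoly d k Y).map (Polynomial.evalRingHom z) = tensorPow d k (Y.map (Polynomial.evalRingHom z)) := by
  ext j i
  show (Polynomial.evalRingHom z) (∏ t, Y (j t) (i t)) = ∏ t, (Polynomial.evalRingHom z) (Y (j t) (i t))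
  exact map_prod _ _ _

lemma map_smulC_eval (z c : ℂ) (M : Matrix (Fin d) (Fin d) (Polynomial ℂ)) :
    ((Polynomial.C c • M).map (Polynomial.evalRingHom z)) = c • (M.map (Polynomial.evalRingHom z)) := by
  ext r s
  simp [Matrix.map_apply, Matrix.smul_apply, smul_eq_mul]

/-- The rational "Cayley-like" matrix function. -/
noncomputable def cayadj (A : Matrix (Fin d) (Fin d) ℂ) : Matrix (Fin d) (Fin d) ℂ :=
  (1 - Complex.I • A) * Matrix.adjugate (1 + Complex.I • A)

noncomputable def cayadjP (A : Matrix (Fin d) (Fin d) (Polynomial ℂ)) :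
    Matrix (Fin d) (Fin d) (Polynomial ℂ) :=
  (1 - Polynomial.C Complex.I • A) * Matrix.adjugate (1 + Polynomial.C Complex.I • A)

lemma cayadjP_map_eval (z : ℂ) (A : Matrix (Fin d) (Fin d) (Polynomial ℂ)) :
    (cayadjP A).map (Polynomial.evalRingHom z) = cayadj (A.map (Polynomial.evalRingHom z)) := by
  have hone : ((1 : Matrix (Fin d) (Fin d) (Polynomial ℂ)).map (Polynomial.evalRingHom z)) = 1 :=
    Matrix.map_one _ (map_zero _) (map_one _)
  rw [cayadjP, cayadj, Matrix.map_mul]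
  congr 1
  · rw [Matrix.map_sub _ (fun a b => map_sub _ a b), hone, map_smulC_eval]
  · rw [show ((1 + Polynomial.C Complex.I • A).adjugate.map (Polynomial.evalRingHom z)) =
        Matrix.adjugate ((1 + Polynomial.C Complex.I • A).map (Polynomial.evalRingHom z)) from
      (Polynomial.evalRingHom z).map_adjugate _]
    congr 1
    rw [Matrix.map_add _ (fun a b => map_add _ a b), hone, map_smulC_eval]

/-- Commutation with `tensorPow` of unitaries implies commutation with `tensorPow (cayadj A)` for
Hermitian `A`. -/
lemma comm_cayadj_of_hermitian {X0 : Matrix (Fin k → Fin d) (Fin k → Fin d) ℂ}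
    (hX : ∀ U : Matrix.unitaryGroup (Fin d) ℂ,
      X0 * tensorPow d k (U : Matrix (Fin d) (Fin d) ℂ) =
        tensorPow d k (U : Matrix (Fin d) (Fin d) ℂ) * X0)
    {A : Matrix (Fin d) (Fin d) ℂ} (hA : A.IsHermitian) :
    X0 * tensorPow d k (cayadj A) = tensorPow d k (cayadj A) * X0 := by
  set B := 1 + Complex.I • A with hB
  have hdetB : B.det ≠ 0 := det_one_add_smul_hermitian_ne_zero (by simp) hA
  have hadj : B.adjugate = B.det • B⁻¹ := by
    rw [Matrix.inv_def, smul_smul, Ring.inverse_eq_inv', mul_inv_cancel₀ hdetB, one_smul]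
  have hG : cayadj A = B.det • ((1 - Complex.I • A) * B⁻¹) := by
    rw [cayadj, ← hB, hadj, Matrix.mul_smul]
  have hU := hX ⟨_, cayley_mem_unitaryGroup hA⟩
  rw [hG, tensorPow_smul, Matrix.mul_smul, Matrix.smul_mul, hU]

/-- For EVERY matrix `A`, `X0` commutes with `tensorPow (cayadj A)`. -/
lemma comm_cayadj_all {X0 : Matrix (Fin k → Fin d) (Fin k → Fin d) ℂ}
    (hX : ∀ U : Matrix.unitaryGroup (Fin d) ℂ,
      X0 * tensorPow d k (U : Matrix (Fin d) (Fin d) ℂ) =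
        tensorPow d k (U : Matrix (Fin d) (Fin d) ℂ) * X0)
    (A : Matrix (Fin d) (Fin d) ℂ) :
    X0 * tensorPow d k (cayadj A) = tensorPow d k (cayadj A) * X0 := by
  classical
  set H1 : Matrix (Fin d) (Fin d) ℂ := (2⁻¹ : ℂ) • (A + Aᴴ) with hH1
  set H2 : Matrix (Fin d) (Fin d) ℂ := (-(2⁻¹ * Complex.I)) • (A - Aᴴ) with hH2
  have hH1h : H1.IsHermitian := by
    rw [Matrix.IsHermitian, hH1, Matrix.conjTranspose_smul, Matrix.conjTranspose_add,
      Matrix.conjTranspose_conjTranspose]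
    rw [show star (2⁻¹ : ℂ) = (2⁻¹ : ℂ) by simp]
    module
  have hH2h : H2.IsHermitian := by
    rw [Matrix.IsHermitian, hH2, Matrix.conjTranspose_smul, Matrix.conjTranspose_sub,
      Matrix.conjTranspose_conjTranspose]
    rw [show star (-(2⁻¹ * Complex.I)) = (2⁻¹ * Complex.I : ℂ) by simp [Complex.star_def]]
    module
  have hsum : ∀ z : ℂ, star z = z → (H1 + z • H2).IsHermitian := by
    intro z hz
    rw [Matrix.IsHermitian, Matrix.conjTranspose_add, hH1h.eq, Matrix.conjTranspose_smul,
      hH2h.eq, hz]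
  -- the polynomial family
  set AP : Matrix (Fin d) (Fin d) (Polynomial ℂ) :=
    H1.map (Polynomial.C) + (Polynomial.X : Polynomial ℂ) • H2.map (Polynomial.C) with hAP
  have hAPmap : ∀ z : ℂ, AP.map (Polynomial.evalRingHom z) = H1 + z • H2 := by
    intro z
    ext r s
    simp only [hAP, Matrix.map_apply, Matrix.add_apply, Matrix.smul_apply, smul_eq_mul,
      Polynomial.eval_add, Polynomial.eval_mul, Polynomial.eval_X,
      Polynomial.eval_C, Polynomial.coe_evalRingHom]
  set Q : Matrix (Fin k → Fin d) (Fin k → Fin d) (Polynomial ℂ) :=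
    X0.map (Polynomial.C) * tpPoly d k (cayadjP AP) -
      tpPoly d k (cayadjP AP) * X0.map (Polynomial.C) with hQ
  have hQmap : ∀ z : ℂ, Q.map (Polynomial.evalRingHom z) =
      X0 * tensorPow d k (cayadj (H1 + z • H2)) -
        tensorPow d k (cayadj (H1 + z • H2)) * X0 := by
    intro z
    have hX0 : (X0.map (Polynomial.C)).map (Polynomial.evalRingHom z) = X0 := by
      ext r s; simp [Matrix.map_apply]
    rw [hQ, Matrix.map_sub _ (fun a b => map_sub _ a b), Matrix.map_mul, Matrix.map_mul,
      tpPoly_map_eval, cayadjP_map_eval, hAPmap, hX0]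
  have hQzero : Q = 0 := by
    refine Matrix.ext fun j i => ?_
    show Q j i = 0
    have hroots : {z : ℂ | Polynomial.IsRoot (Q j i) z}.Infinite := by
      apply Set.Infinite.mono (s := Set.range (Complex.ofReal))
      · rintro _ ⟨t, rfl⟩
        have hherm := comm_cayadj_of_hermitian hX (hsum (t : ℂ) (by simp [Complex.star_def]))
        have h0 : Q.map (Polynomial.evalRingHom (t : ℂ)) = 0 := by
          rw [hQmap t]
          exact sub_eq_zero_of_eq hherm
        show Polynomial.IsRoot (Q j i) (t : ℂ)
        simpa [Matrix.map_apply] using congrArg (fun M : Matrix _ _ ℂ => M j i) h0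
      · exact Set.infinite_range_of_injective Complex.ofReal_injective
    exact Polynomial.eq_zero_of_infinite_isRoot _ hroots
  have hA' : H1 + Complex.I • H2 = A := by
    have hc : Complex.I * -(2⁻¹ * Complex.I) = 2⁻¹ := by
      ring_nf
      rw [Complex.I_sq]
      ring
    rw [hH1, hH2, smul_smul, hc]
    module
  have hI := hQmap Complex.I
  rw [hQzero, hA'] at hI
  have hI' : (0 : Matrix (Fin k → Fin d) (Fin k → Fin d) ℂ) =
      X0 * tensorPow d k (cayadj A) - tensorPow d k (cayadj A) * X0 := by
    rw [← hI]
    refine Matrix.ext fun j i => ?_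
    simp [Matrix.map_apply]
  exact eq_of_sub_eq_zero hI'.symm

end Stage3

section Stage4
open Matrix
variable {d k : ℕ}

lemma comm_tensorPow_all {X0 : Matrix (Fin k → Fin d) (Fin k → Fin d) ℂ}
    (hX : ∀ U : Matrix.unitaryGroup (Fin d) ℂ,
      X0 * tensorPow d k (U : Matrix (Fin d) (Fin d) ℂ) =
        tensorPow d k (U : Matrix (Fin d) (Fin d) ℂ) * X0)
    (Y : Matrix (Fin d) (Fin d) ℂ) :
    X0 * tensorPow d k Y = tensorPow d k Y * X0 := by
  classical
  obtain ⟨t, ht0, hdet⟩ : ∃ t : ℂ, t ≠ 0 ∧ (1 + t • Y).det ≠ 0 := by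
    set q : Polynomial ℂ :=
      (1 + (Polynomial.X : Polynomial ℂ) • Y.map Polynomial.C).det with hq
    have hqeval : ∀ z : ℂ, q.eval z = (1 + z • Y).det := by
      intro z
      have hmap : (1 + (Polynomial.X : Polynomial ℂ) • Y.map Polynomial.C).map
          (Polynomial.evalRingHom z) = 1 + z • Y := by
        refine Matrix.ext fun r s => ?_
        simp only [Polynomial.coe_evalRingHom, Matrix.map_apply, Matrix.add_apply,
          Matrix.smul_apply, Matrix.one_apply, smul_eq_mul, Polynomial.eval_add,
          Polynomial.eval_mul, Polynomial.eval_X, Polynomial.eval_C,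
          apply_ite (Polynomial.eval z), Polynomial.eval_one, Polynomial.eval_zero]
      have h2 := RingHom.map_det (Polynomial.evalRingHom z)
        (1 + (Polynomial.X : Polynomial ℂ) • Y.map Polynomial.C)
      rw [RingHom.mapMatrix_apply, hmap] at h2
      rw [hq]
      simpa using h2
    have hq0 : q ≠ 0 := by
      intro h
      have h1 := hqeval 0
      rw [h] at h1
      simp at h1
    have hfin : ({z : ℂ | q.IsRoot z} ∪ {0}).Finite :=
      (Polynomial.finite_setOf_isRoot hq0).union (Set.finite_singleton 0)
    obtain ⟨t, ht⟩ := hfin.infinite_compl.nonempty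
    simp only [Set.mem_compl_iff, Set.mem_union, Set.mem_setOf_eq, Set.mem_singleton_iff,
      not_or] at ht
    refine ⟨t, ht.2, ?_⟩
    rw [← hqeval]
    exact ht.1
  set D := 1 + t • Y with hD
  have hdetD : IsUnit D.det := isUnit_iff_ne_zero.mpr hdet
  have hDinv : D⁻¹ * D = 1 := Matrix.nonsing_inv_mul _ hdetD
  set B := (2 : ℂ) • D⁻¹ with hB
  have hBmul : B * ((2⁻¹ : ℂ) • D) = 1 := by
    rw [hB, Matrix.smul_mul, Matrix.mul_smul, smul_smul]
    rw [hDinv]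
    norm_num
  have hBinv : B⁻¹ = (2⁻¹ : ℂ) • D := Matrix.inv_eq_right_inv hBmul
  have hdetB : B.det ≠ 0 := by
    have hdetmul : B.det * ((2⁻¹ : ℂ) • D).det = 1 := by
      rw [← Matrix.det_mul, hBmul, Matrix.det_one]
    exact left_ne_zero_of_mul_eq_one hdetmul
  set A := Complex.I • ((1 : Matrix (Fin d) (Fin d) ℂ) - B) with hA
  have h1 : 1 + Complex.I • A = B := by
    rw [hA, smul_smul, Complex.I_mul_I]
    module
  have h2' : 1 - Complex.I • A = (2 : ℂ) • (1 : Matrix (Fin d) (Fin d) ℂ) - B := by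
    rw [hA, smul_smul, Complex.I_mul_I]
    module
  have hadjB : B.adjugate = B.det • B⁻¹ := by
    rw [Matrix.inv_def, smul_smul, Ring.inverse_eq_inv', mul_inv_cancel₀ hdetB, one_smul]
  have hBD : B * D = (2 : ℂ) • 1 := by
    rw [hB, Matrix.smul_mul, hDinv]
  have hGA : cayadj A = (B.det * t) • Y := by
    rw [cayadj, h1, h2', hadjB, hBinv]
    rw [Matrix.mul_smul, Matrix.mul_smul, Matrix.sub_mul, hBD, Matrix.smul_mul,
      Matrix.one_mul]
    have hDY : D = 1 + t • Y := hD
    rw [hDY]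
    match_scalars
    · ring
    · ring
  have hcomm := comm_cayadj_all hX A
  rw [hGA, tensorPow_smul, Matrix.mul_smul, Matrix.smul_mul] at hcomm
  have hc : ((B.det * t) ^ k : ℂ) ≠ 0 := pow_ne_zero _ (mul_ne_zero hdetB ht0)
  exact smul_right_injective (Matrix (Fin k → Fin d) (Fin k → Fin d) ℂ) hc hcomm

end Stage4

section Stage5
open Matrix
variable {k : ℕ} {α : Type*} [Fintype α] [DecidableEq α]

/-- the type (content) of a tuple -/
noncomputable def typeF (f : Fin k → α) : α →₀ ℕ := ∑ t, Finsupp.single (f t) 1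

lemma typeF_apply (f : Fin k → α) (a : α) :
    typeF f a = (Finset.univ.filter (fun t => f t = a)).card := by
  rw [typeF, Finsupp.finset_sum_apply]
  rw [Finset.sum_congr rfl (fun t _ => Finsupp.single_apply)]
  rw [Finset.card_filter]

/-- tuples with equal type differ by a permutation -/
lemma exists_perm_of_typeF_eq {f g : Fin k → α} (h : typeF f = typeF g) :
    ∃ σ : Equiv.Perm (Fin k), f = g ∘ σ := by
  have hcard : ∀ a, Fintype.card {t // f t = a} = Fintype.card {t // g t = a} := by
    intro a
    rw [Fintype.card_subtype, Fintype.card_subtype]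
    rw [← typeF_apply, ← typeF_apply, h]
  let e : ∀ a, {t // f t = a} ≃ {t // g t = a} := fun a => Fintype.equivOfCardEq (hcard a)
  let σ : Equiv.Perm (Fin k) :=
    (Equiv.sigmaFiberEquiv f).symm.trans ((Equiv.sigmaCongrRight e).trans
      (Equiv.sigmaFiberEquiv g))
  refine ⟨σ, funext fun t => ?_⟩
  show f t = g (σ t)
  exact ((e (f t)) ⟨t, rfl⟩).prop.symm

lemma prod_X_eq_monomial (f : Fin k → α) :
    (∏ t, (MvPolynomial.X (f t) : MvPolynomial α ℂ)) = MvPolynomial.monomial (typeF f) 1 := by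
  rw [typeF]
  induction (Finset.univ : Finset (Fin k)) using Finset.induction with
  | empty => simp
  | @insert a s hx ih =>
    rw [Finset.prod_insert hx, Finset.sum_insert hx, ih,
      ← pow_one (MvPolynomial.X (f a) : MvPolynomial α ℂ), MvPolynomial.X_pow_eq_monomial,
      MvPolynomial.monomial_mul, one_mul]

/-- The key spanning fact: any symmetric function on tuples is a linear combination of
product functions. -/
lemma symm_mem_span_prod (ζ : (Fin k → α) → ℂ)
    (hζ : ∀ (σ : Equiv.Perm (Fin k)) f, ζ (f ∘ σ) = ζ f) :
    ζ ∈ Submodule.span ℂ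
      (Set.range (fun (Y : α → ℂ) => (fun f : Fin k → α => ∏ t, Y (f t)))) := by
  classical
  by_contra hnot
  obtain ⟨φ, hφζ, hφbot⟩ := Submodule.exists_dual_map_eq_bot_of_notMem hnot inferInstance
  have hφ0 : ∀ χ ∈ Submodule.span ℂ
      (Set.range (fun (Y : α → ℂ) => (fun f : Fin k → α => ∏ t, Y (f t)))), φ χ = 0 := by
    intro χ hχ
    have : φ χ ∈ (Submodule.span ℂ _).map φ := Submodule.mem_map_of_mem hχ
    rw [hφbot] at this
    simpa using this
  -- weights
  set w : (Fin k → α) → ℂ := fun f => φ (fun g => if f = g then 1 else 0) with hw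
  have hφ_eq : ∀ χ : (Fin k → α) → ℂ, φ χ = ∑ f, χ f * w f := by
    intro χ
    conv_lhs => rw [pi_eq_sum_univ χ]
    rw [map_sum]
    exact Finset.sum_congr rfl fun f _ => by rw [_root_.map_smul, smul_eq_mul, hw]
  -- the polynomial
  set Pl : MvPolynomial α ℂ :=
    ∑ f : Fin k → α, MvPolynomial.C (w f) * ∏ t, MvPolynomial.X (f t) with hPl
  have hPl0 : Pl = 0 := by
    apply MvPolynomial.funext
    intro Y
    rw [hPl, map_sum, map_zero]
    have : ∀ f : Fin k → α, MvPolynomial.eval Y (MvPolynomial.C (w f) * ∏ t, MvPolynomial.X (f t))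
        = (∏ t, Y (f t)) * w f := by
      intro f
      rw [_root_.map_mul, MvPolynomial.eval_C, map_prod]
      simp [mul_comm]
    rw [Finset.sum_congr rfl fun f _ => this f]
    have hmem : (fun f : Fin k → α => ∏ t, Y (f t)) ∈ Submodule.span ℂ
        (Set.range (fun (Y : α → ℂ) => (fun f : Fin k → α => ∏ t, Y (f t)))) :=
      Submodule.subset_span ⟨Y, rfl⟩
    rw [← hφ_eq]
    exact hφ0 _ hmem
  -- coefficient extraction
  have hfiber : ∀ μ : α →₀ ℕ, (∑ f ∈ Finset.univ.filter (fun f : Fin k → α => typeF f = μ),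
      w f) = 0 := by
    intro μ
    have := congrArg (MvPolynomial.coeff μ) hPl0
    rw [hPl, MvPolynomial.coeff_zero] at this
    rw [MvPolynomial.coeff_sum] at this
    rw [Finset.sum_congr rfl (fun f _ => by
      rw [prod_X_eq_monomial, MvPolynomial.C_mul_monomial, mul_one,
        MvPolynomial.coeff_monomial])] at this
    rwa [← Finset.sum_filter] at this
  -- conclude
  have hζ_type : ∀ f g : Fin k → α, typeF f = typeF g → ζ f = ζ g := by
    intro f g h
    obtain ⟨σ, rfl⟩ := exists_perm_of_typeF_eq h
    exact hζ σ g
  have : φ ζ = 0 := by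
    rw [hφ_eq]
    rw [← Finset.sum_fiberwise_of_maps_to (g := typeF)
      (fun f _ => Finset.mem_image_of_mem typeF (Finset.mem_univ f)) (fun f => ζ f * w f)]
    refine Finset.sum_eq_zero fun μ hμ => ?_
    obtain ⟨g, _, rfl⟩ := Finset.mem_image.mp hμ
    calc (∑ f ∈ Finset.univ.filter (fun f => typeF f = typeF g), ζ f * w f)
        = ∑ f ∈ Finset.univ.filter (fun f => typeF f = typeF g), ζ g * w f := by
          refine Finset.sum_congr rfl fun f hf => ?_
          rw [hζ_type f g (Finset.mem_filter.mp hf).2]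
      _ = ζ g * ∑ f ∈ Finset.univ.filter (fun f => typeF f = typeF g), w f := by
          rw [Finset.mul_sum]
      _ = 0 := by rw [hfiber]; ring
  exact hφζ this

end Stage5

section Stage6
open Matrix
variable {d k : ℕ}

lemma mem_span_tensorPow_of_comm {Z : Matrix (Fin k → Fin d) (Fin k → Fin d) ℂ}
    (hZ : ∀ π : Equiv.Perm (Fin k), permOp d k π * Z = Z * permOp d k π) :
    Z ∈ Submodule.span ℂ (Set.range (tensorPow d k)) := by
  classical
  have hsym : ∀ (π : Equiv.Perm (Fin k)) (j i : Fin k → Fin d), Z (j ∘ π) (i ∘ π) = Z j i := by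
    intro π j i
    have h := congrArg (fun M : Matrix (Fin k → Fin d) (Fin k → Fin d) ℂ => M j (i ∘ π)) (hZ π)
    simp only [permOp_mul_apply, mul_permOp_apply] at h
    have hi : (i ∘ π) ∘ π.symm = i := by funext t; simp
    rwa [hi] at h
  set ζ : (Fin k → Fin d × Fin d) → ℂ :=
    fun f => Z (fun t => (f t).1) (fun t => (f t).2) with hζdef
  have hζsym : ∀ (σ : Equiv.Perm (Fin k)) f, ζ (f ∘ σ) = ζ f := by
    intro σ f
    exact hsym σ (fun t => (f t).1) (fun t => (f t).2)
  have hmem := symm_mem_span_prod ζ hζsym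
  let L : ((Fin k → Fin d × Fin d) → ℂ) →ₗ[ℂ] Matrix (Fin k → Fin d) (Fin k → Fin d) ℂ :=
    { toFun := fun χ => Matrix.of fun j i => χ (fun t => (j t, i t))
      map_add' := fun x y => rfl
      map_smul' := fun c x => rfl }
  have hLζ : L ζ = Z := rfl
  have h2 : Submodule.map L (Submodule.span ℂ (Set.range
      (fun (Y : Fin d × Fin d → ℂ) => fun f : Fin k → Fin d × Fin d => ∏ t, Y (f t)))) ≤
      Submodule.span ℂ (Set.range (tensorPow d k)) := by
    rw [Submodule.map_span]
    apply Submodule.span_le.mpr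
    rintro _ ⟨_, ⟨Y, rfl⟩, rfl⟩
    exact Submodule.subset_span ⟨Matrix.of fun a b => Y (a, b), rfl⟩
  have h3 := h2 (Submodule.mem_map_of_mem hmem)
  rwa [hLζ] at h3

lemma comm_of_mem_span_tensorPow {X0 Z : Matrix (Fin k → Fin d) (Fin k → Fin d) ℂ}
    (hAll : ∀ Y, X0 * tensorPow d k Y = tensorPow d k Y * X0)
    (hZ : Z ∈ Submodule.span ℂ (Set.range (tensorPow d k))) : X0 * Z = Z * X0 := by
  induction hZ using Submodule.span_induction with
  | mem x hx => obtain ⟨Y, rfl⟩ := hx; exact hAll Y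
  | zero => simp
  | add x y _ _ hx hy => rw [Matrix.mul_add, Matrix.add_mul, hx, hy]
  | smul c x _ hx => rw [Matrix.mul_smul, Matrix.smul_mul, hx]

lemma permOp_mul_permOp (π σ : Equiv.Perm (Fin k)) :
    permOp d k π * permOp d k σ = permOp d k (π * σ) := by
  refine Matrix.ext fun j i => ?_
  rw [permOp_mul_apply (d := d) π (permOp d k σ) j i]
  show (if j ∘ π = i ∘ σ.symm then (1:ℂ) else 0) = if j = i ∘ (π * σ).symm then 1 else 0
  congr 1
  have : (j ∘ π = i ∘ σ.symm) ↔ (j = i ∘ (π * σ).symm) := by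
    constructor
    · intro h
      funext t
      have := congrFun h (π.symm t)
      simpa [Equiv.Perm.mul_def] using this
    · rintro rfl
      funext t
      simp [Equiv.Perm.mul_def]
  rw [this]

end Stage6

section Stage7
open Matrix
variable {d k : ℕ}

lemma permOp_one : permOp d k (1 : Equiv.Perm (Fin k)) = 1 := by
  refine Matrix.ext fun j i => ?_
  show (if j = i ∘ (1 : Equiv.Perm (Fin k)).symm then (1:ℂ) else 0) = _
  have : (i ∘ (1 : Equiv.Perm (Fin k)).symm) = i := rfl
  rw [this, Matrix.one_apply]

noncomputable def matE (d k : ℕ) :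
    Matrix (Fin k → Fin d) (Fin k → Fin d) ℂ ≃ₗ[ℂ]
      EuclideanSpace ℂ ((Fin k → Fin d) × (Fin k → Fin d)) where
  toFun M := WithLp.toLp 2 (fun p : (Fin k → Fin d) × (Fin k → Fin d) => M p.1 p.2)
  invFun x := Matrix.of fun r c => x (r, c)
  left_inv M := rfl
  right_inv x := rfl
  map_add' M N := rfl
  map_smul' c M := rfl

lemma matE_apply (M : Matrix (Fin k → Fin d) (Fin k → Fin d) ℂ)
    (p : (Fin k → Fin d) × (Fin k → Fin d)) : matE d k M p = M p.1 p.2 := rfl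

lemma orthProj_comm {E : Type*} [NormedAddCommGroup E] [InnerProductSpace ℂ E]
    [FiniteDimensional ℂ E] (K : Submodule ℂ E) (L : E ≃ₗ[ℂ] E)
    (hinner : ∀ x y : E, (inner ℂ (L x) (L y) : ℂ) = inner ℂ x y)
    (hK : ∀ x ∈ K, L x ∈ K) (hK' : ∀ x ∈ K, L.symm x ∈ K) (u : E) :
    (K.orthogonalProjectionOnto (L u) : E) = L (K.orthogonalProjectionOnto u) := by
  refine Submodule.eq_starProjection_of_mem_of_inner_eq_zero
    (hK _ (K.orthogonalProjectionOnto u).2) (fun w hw => ?_)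
  have h1 : L u - L (K.orthogonalProjectionOnto u) = L (u - K.orthogonalProjectionOnto u) := by
    rw [map_sub]
  have h2 : (w : E) = L (L.symm w) := (L.apply_symm_apply w).symm
  rw [h1, h2, hinner]
  exact (Submodule.mem_orthogonal' K _).mp
    (Submodule.sub_starProjection_mem_orthogonal (K := K) u) _ (hK' w hw)

lemma inner_permL (π : Equiv.Perm (Fin k)) (M N : Matrix (Fin k → Fin d) (Fin k → Fin d) ℂ) :
    (inner ℂ (matE d k (permOp d k π * M)) (matE d k (permOp d k π * N)) : ℂ) =
      inner ℂ (matE d k M) (matE d k N) := by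
  simp only [PiLp.inner_apply, RCLike.inner_apply, matE_apply, permOp_mul_apply]
  exact Fintype.sum_equiv
    (Equiv.prodCongr (Equiv.arrowCongr (π.symm : Fin k ≃ Fin k) (Equiv.refl (Fin d)))
      (Equiv.refl (Fin k → Fin d)))
    _ _ (fun p => by simp [Equiv.arrowCongr])

/-- The hard direction: a matrix commuting with all tensor powers lies in the span of the
permutation operators. -/
lemma mem_span_permOp {X0 : Matrix (Fin k → Fin d) (Fin k → Fin d) ℂ}
    (hAll : ∀ Y, X0 * tensorPow d k Y = tensorPow d k Y * X0) :
    X0 ∈ Submodule.span ℂ (Set.range (permOp d k)) := by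
  classical
  set P := Submodule.span ℂ (Set.range (permOp d k)) with hP
  have hPmul : ∀ (π : Equiv.Perm (Fin k)), ∀ m ∈ P, permOp d k π * m ∈ P := by
    intro π m hm
    induction hm using Submodule.span_induction with
    | mem x hx =>
      obtain ⟨σ, rfl⟩ := hx
      rw [permOp_mul_permOp]
      exact Submodule.subset_span ⟨π * σ, rfl⟩
    | zero => rw [Matrix.mul_zero]; exact Submodule.zero_mem _
    | add x y _ _ hx hy => rw [Matrix.mul_add]; exact Submodule.add_mem _ hx hy
    | smul c x _ hx => rw [Matrix.mul_smul]; exact Submodule.smul_mem _ c hx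
  set K : Submodule ℂ (EuclideanSpace ℂ ((Fin k → Fin d) × (Fin k → Fin d))) :=
    P.map (matE d k).toLinearMap with hK
  set T : Matrix (Fin k → Fin d) (Fin k → Fin d) ℂ →ₗ[ℂ]
      Matrix (Fin k → Fin d) (Fin k → Fin d) ℂ :=
    ((matE d k).symm.toLinearMap.comp ((K.subtype.comp
      K.orthogonalProjectionOnto.toLinearMap).comp (matE d k).toLinearMap)) with hT
  have hTapp : ∀ M, T M = (matE d k).symm (K.orthogonalProjectionOnto (matE d k M) :
      EuclideanSpace ℂ ((Fin k → Fin d) × (Fin k → Fin d))) := fun M => rfl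
  have hTmem : ∀ M, T M ∈ P := by
    intro M
    obtain ⟨m, hm, hme⟩ := (K.orthogonalProjectionOnto (matE d k M)).2
    have h4 : T M = m := by
      rw [hTapp, ← hme]
      exact (matE d k).symm_apply_apply m
    rw [h4]; exact hm
  have hTfix : ∀ M ∈ P, T M = M := by
    intro M hM
    have h5 : ((K.orthogonalProjectionOnto) (matE d k M) : EuclideanSpace ℂ _) = matE d k M :=
      Submodule.starProjection_eq_self_iff.mpr (Submodule.mem_map_of_mem hM)
    rw [hTapp, h5]
    exact (matE d k).symm_apply_apply M
  -- the permuted linear equivs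
  have hTperm : ∀ (π : Equiv.Perm (Fin k)) M,
      T (permOp d k π * M) = permOp d k π * T M := by
    intro π M
    set Lmat : Matrix (Fin k → Fin d) (Fin k → Fin d) ℂ ≃ₗ[ℂ]
        Matrix (Fin k → Fin d) (Fin k → Fin d) ℂ :=
      LinearEquiv.ofLinear (LinearMap.mulLeft ℂ (permOp d k π))
        (LinearMap.mulLeft ℂ (permOp d k π⁻¹))
        (by
          ext N
          simp only [LinearMap.coe_comp, Function.comp_apply, LinearMap.mulLeft_apply,
            LinearMap.id_coe, id_eq]
          rw [← Matrix.mul_assoc, permOp_mul_permOp, mul_inv_cancel, permOp_one,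
            Matrix.one_mul])
        (by
          ext N
          simp only [LinearMap.coe_comp, Function.comp_apply, LinearMap.mulLeft_apply,
            LinearMap.id_coe, id_eq]
          rw [← Matrix.mul_assoc, permOp_mul_permOp, inv_mul_cancel, permOp_one,
            Matrix.one_mul]) with hLmat
    set L : EuclideanSpace ℂ ((Fin k → Fin d) × (Fin k → Fin d)) ≃ₗ[ℂ]
        EuclideanSpace ℂ ((Fin k → Fin d) × (Fin k → Fin d)) :=
      ((matE d k).symm.trans Lmat).trans (matE d k) with hL
    have hLapp : ∀ x, L x = matE d k (permOp d k π * (matE d k).symm x) := fun x => rfl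
    have hLsymm : ∀ x, L.symm x = matE d k (permOp d k π⁻¹ * (matE d k).symm x) :=
      fun x => rfl
    have hinner : ∀ x y, (inner ℂ (L x) (L y) : ℂ) = inner ℂ x y := by
      intro x y
      rw [hLapp, hLapp]
      have := inner_permL π ((matE d k).symm x) ((matE d k).symm y)
      rwa [(matE d k).apply_symm_apply, (matE d k).apply_symm_apply] at this
    have hKmap : ∀ x ∈ K, L x ∈ K := by
      intro x hx
      obtain ⟨m, hm, rfl⟩ := hx
      rw [hLapp]
      have : (matE d k).symm ((matE d k).toLinearMap m) = m := (matE d k).symm_apply_apply m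
      rw [this]
      exact Submodule.mem_map_of_mem (hPmul π m hm)
    have hKmap' : ∀ x ∈ K, L.symm x ∈ K := by
      intro x hx
      obtain ⟨m, hm, rfl⟩ := hx
      rw [hLsymm]
      have : (matE d k).symm ((matE d k).toLinearMap m) = m := (matE d k).symm_apply_apply m
      rw [this]
      exact Submodule.mem_map_of_mem (hPmul π⁻¹ m hm)
    have hproj := orthProj_comm K L hinner hKmap hKmap' (matE d k M)
    have hLM : L (matE d k M) = matE d k (permOp d k π * M) := by
      rw [hLapp, (matE d k).symm_apply_apply]
    rw [hTapp, hTapp, ← hLM, hproj, hLapp, (matE d k).symm_apply_apply]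
  -- elementary matrices
  set Esb : (Fin k → Fin d) → (Fin k → Fin d) → Matrix (Fin k → Fin d) (Fin k → Fin d) ℂ :=
    fun s c' => Matrix.of fun r'' c'' => if r'' = s ∧ c'' = c' then 1 else 0 with hEsb
  have hrep : ∀ M : Matrix (Fin k → Fin d) (Fin k → Fin d) ℂ,
      M = ∑ s, ∑ c', M s c' • Esb s c' := by
    intro M
    refine Matrix.ext fun r c => ?_
    rw [Matrix.sum_apply]
    simp only [Matrix.sum_apply, Matrix.smul_apply, hEsb, Matrix.of_apply, smul_eq_mul,
      mul_ite, mul_one, mul_zero, ite_and]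
    rw [Finset.sum_comm]
    simp
  set B : (Fin k → Fin d) → (Fin k → Fin d) → Matrix (Fin k → Fin d) (Fin k → Fin d) ℂ :=
    fun c c' => Matrix.of fun r s => T (Esb s c') r c with hB
  have hWE : ∀ (π : Equiv.Perm (Fin k)) s c',
      permOp d k π * Esb s c' = ∑ q, permOp d k π q s • Esb q c' := by
    intro π s c'
    refine Matrix.ext fun r'' c'' => ?_
    rw [permOp_mul_apply, Matrix.sum_apply]
    simp only [hEsb, Matrix.of_apply, Matrix.smul_apply, smul_eq_mul, mul_ite, mul_one,
      mul_zero, ite_and]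
    rw [Finset.sum_ite_eq Finset.univ r'' (fun q => if c'' = c' then permOp d k π q s else 0)]
    simp only [Finset.mem_univ, if_true]
    by_cases hc : c'' = c'
    · simp only [hc, if_true]
      rw [permOp, Matrix.of_apply]
      congr 1
      rw [comp_perm_eq_iff]
      exact propext ⟨Eq.symm, Eq.symm⟩
    · simp [hc]
  have hBcomm : ∀ (π : Equiv.Perm (Fin k)) c c',
      permOp d k π * B c c' = B c c' * permOp d k π := by
    intro π c c'
    refine Matrix.ext fun r s => ?_
    rw [permOp_mul_apply, Matrix.mul_apply]
    show T (Esb s c') (r ∘ π) c = _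
    have hlhs : T (Esb s c') (r ∘ π) c = (permOp d k π * T (Esb s c')) r c := by
      rw [permOp_mul_apply]
    rw [hlhs, ← hTperm, hWE, map_sum]
    rw [Matrix.sum_apply]
    refine Finset.sum_congr rfl fun q _ => ?_
    rw [_root_.map_smul, Matrix.smul_apply, smul_eq_mul, mul_comm]
    rfl
  have hXB : ∀ c c', X0 * B c c' = B c c' * X0 := fun c c' =>
    comm_of_mem_span_tensorPow hAll (mem_span_tensorPow_of_comm (fun π => hBcomm π c c'))
  have hTexp : ∀ (N : Matrix (Fin k → Fin d) (Fin k → Fin d) ℂ) r c,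
      T N r c = ∑ c', ∑ s, N s c' * B c c' r s := by
    intro N r c
    conv_lhs => rw [hrep N]
    rw [map_sum, Matrix.sum_apply]
    rw [Finset.sum_comm]
    refine Finset.sum_congr rfl fun c' _ => ?_
    rw [map_sum, Matrix.sum_apply]
    refine Finset.sum_congr rfl fun s _ => ?_
    rw [_root_.map_smul, Matrix.smul_apply, smul_eq_mul]
    rfl
  have hTX : ∀ M, T (X0 * M) = X0 * T M := by
    intro M
    refine Matrix.ext fun r c => ?_
    rw [hTexp (X0 * M) r c, Matrix.mul_apply]
    have lhs_eq : (∑ c', ∑ s, (X0 * M) s c' * B c c' r s) =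
        ∑ c', ∑ q, M q c' * (B c c' * X0) r q := by
      refine Finset.sum_congr rfl fun c' _ => ?_
      have : (∑ s, (X0 * M) s c' * B c c' r s) =
          ∑ s, ∑ q, X0 s q * M q c' * B c c' r s := by
        refine Finset.sum_congr rfl fun s _ => ?_
        rw [Matrix.mul_apply, Finset.sum_mul]
      rw [this, Finset.sum_comm]
      refine Finset.sum_congr rfl fun q _ => ?_
      rw [Matrix.mul_apply, Finset.mul_sum]
      refine Finset.sum_congr rfl fun s _ => ?_
      ring
    rw [lhs_eq]
    have rhs_eq : (∑ s, X0 r s * T M s c) = ∑ c', ∑ q, M q c' * (X0 * B c c') r q := by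
      have : (∑ s, X0 r s * T M s c) = ∑ s, ∑ c', ∑ q, X0 r s * (M q c' * B c c' s q) := by
        refine Finset.sum_congr rfl fun s _ => ?_
        rw [hTexp M s c, Finset.mul_sum]
        refine Finset.sum_congr rfl fun c' _ => ?_
        rw [Finset.mul_sum]
      rw [this, Finset.sum_comm]
      refine Finset.sum_congr rfl fun c' _ => ?_
      rw [Finset.sum_comm]
      refine Finset.sum_congr rfl fun q _ => ?_
      rw [Matrix.mul_apply, Finset.mul_sum]
      refine Finset.sum_congr rfl fun s _ => ?_
      ring
    rw [rhs_eq]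
    refine Finset.sum_congr rfl fun c' _ => Finset.sum_congr rfl fun q _ => ?_
    rw [hXB]
  -- conclude
  have h1P : (1 : Matrix (Fin k → Fin d) (Fin k → Fin d) ℂ) ∈ P := by
    rw [← permOp_one (d := d) (k := k)]
    exact Submodule.subset_span ⟨1, rfl⟩
  have hX0 : T X0 = X0 := by
    have := hTX 1
    rw [Matrix.mul_one, hTfix 1 h1P, Matrix.mul_one] at this
    exact this
  rw [← hX0]
  exact hTmem X0

end Stage7

end Aux

/-- An operator `X` on `(ℂ^d)^{⊗k}` commutes with `U^{⊗k}` for all unitaries `U` if and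
only if `X` is a linear combination of permutation operators `W_π`, `π ∈ S_k`
(Schur–Weyl duality, unitary version; Theorem 7.16 of Watrous). -/
theorem commutes_with_tensorPow_iff_permOp_span (d k : ℕ)
    (X : Matrix (Fin k → Fin d) (Fin k → Fin d) ℂ) :
    (∀ U : Matrix.unitaryGroup (Fin d) ℂ,
        X * tensorPow d k (U : Matrix (Fin d) (Fin d) ℂ) =
          tensorPow d k (U : Matrix (Fin d) (Fin d) ℂ) * X) ↔
    ∃ c : Equiv.Perm (Fin k) → ℂ, X = ∑ π : Equiv.Perm (Fin k), c π • permOp d k π := by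
  constructor
  · intro hX
    have hmem := mem_span_permOp (fun Y => comm_tensorPow_all hX Y)
    obtain ⟨c, hc⟩ := (Submodule.mem_span_range_iff_exists_fun ℂ).mp hmem
    exact ⟨c, hc.symm⟩
  · rintro ⟨c, rfl⟩ U
    rw [Finset.sum_mul, Finset.mul_sum]
    refine Finset.sum_congr rfl fun π _ => ?_
    rw [Matrix.smul_mul, Matrix.mul_smul, permOp_comm_tensorPow]
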